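/- arXiv:1104.4513 — 2 statements merged into one kernel-verified Lean document; each statement's English description precedes it below -/
import Mathlib

section
/- Let X be a random self-adjoint n×n complex matrix (a measurable map from a probability space to the self-adjoint n×n matrices), and let k ≤ n be a positive integer. Then for every real t, the probability that λ_k(X) ≥ t is at most the infimum over θ > 0 of the minimum over V ∈ 𝕍_{n-k+1,n} of e^{-θt} · E[tr exp(θ V* X V)]. -/
open MeasureTheory ProbabilityTheory Matrix
open scoped ENNReal NNReal ComplexOrder

noncomputable section

namespace Paper

/-- Entrywise measurable space on matrices. -/
instance matMeasurableSpace {m l : ℕ} {𝕜 : Type*} [MeasurableSpace 𝕜] :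
    MeasurableSpace (Matrix (Fin m) (Fin l) 𝕜) :=
  show MeasurableSpace (Fin m → Fin l → 𝕜) from inferInstance

/-- The `k`-th largest eigenvalue (1-indexed) of a self-adjoint matrix;
junk value `0` if the matrix is not self-adjoint. -/
noncomputable def lambdaK {𝕜 : Type*} [RCLike 𝕜] {n : ℕ} (k : ℕ)
    (A : Matrix (Fin n) (Fin n) 𝕜) : ℝ :=
  if h : A.IsHermitian then
    (Multiset.sort (↑(List.ofFn h.eigenvalues) : Multiset ℝ) (· ≤ ·)).getD (n - k) 0
  else 0

/-- Matrix exponential of a self-adjoint matrix, via the spectral decomposition;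
junk value `1` if the matrix is not self-adjoint. -/
noncomputable def matExp {𝕜 : Type*} [RCLike 𝕜] {n : ℕ}
    (A : Matrix (Fin n) (Fin n) 𝕜) : Matrix (Fin n) (Fin n) 𝕜 :=
  if h : A.IsHermitian then
    (h.eigenvectorUnitary : Matrix (Fin n) (Fin n) 𝕜) *
      Matrix.diagonal (fun i => ((Real.exp (h.eigenvalues i) : ℝ) : 𝕜)) *
      star (h.eigenvectorUnitary : Matrix (Fin n) (Fin n) 𝕜)
  else 1

/-- Matrix logarithm of a self-adjoint (in applications: positive-definite) matrix,
via the spectral decomposition; junk value `0` if the matrix is not self-adjoint. -/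
noncomputable def matLog {𝕜 : Type*} [RCLike 𝕜] {n : ℕ}
    (A : Matrix (Fin n) (Fin n) 𝕜) : Matrix (Fin n) (Fin n) 𝕜 :=
  if h : A.IsHermitian then
    (h.eigenvectorUnitary : Matrix (Fin n) (Fin n) 𝕜) *
      Matrix.diagonal (fun i => ((Real.log (h.eigenvalues i) : ℝ) : 𝕜)) *
      star (h.eigenvectorUnitary : Matrix (Fin n) (Fin n) 𝕜)
  else 0

/-- The Loewner (semidefinite) order `A ⪯ B`: `B - A` is positive semidefinite. -/
def LoewnerLE {𝕜 : Type*} [RCLike 𝕜] {n : ℕ} (A B : Matrix (Fin n) (Fin n) 𝕜) : Prop :=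
  (B - A).PosSemidef

/-- Entrywise expectation (Bochner integral) of a random matrix. -/
noncomputable def matExpect {Ω : Type*} [MeasurableSpace Ω] (μ : Measure Ω)
    {a b : ℕ} {𝕜 : Type*} [RCLike 𝕜] (X : Ω → Matrix (Fin a) (Fin b) 𝕜) :
    Matrix (Fin a) (Fin b) 𝕜 :=
  Matrix.of fun i j => ∫ ω, X ω i j ∂μ

/-- Entrywise integrability of a random matrix. -/
def MatIntegrable {Ω : Type*} [MeasurableSpace Ω] (μ : Measure Ω)
    {a b : ℕ} {𝕜 : Type*} [RCLike 𝕜] (X : Ω → Matrix (Fin a) (Fin b) 𝕜) : Prop :=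
  ∀ i j, Integrable (fun ω => X ω i j) μ

/-- The Stiefel manifold `𝕍_{d,n}`: isometric embeddings of `𝕜^d` into `𝕜^n`. -/
def Stiefel (𝕜 : Type*) [RCLike 𝕜] (d n : ℕ) : Type _ :=
  {V : Matrix (Fin n) (Fin d) 𝕜 // Vᴴ * V = 1}

/-- Real part of the trace. -/
noncomputable def reTrace {𝕜 : Type*} [RCLike 𝕜] {n : ℕ}
    (A : Matrix (Fin n) (Fin n) 𝕜) : ℝ :=
  RCLike.re A.trace

/-! ### Auxiliary lemmas -/

section Aux

open Finset

lemma unit_mul_star {d : ℕ} (u : Matrix.unitaryGroup (Fin d) ℂ) :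
    (u : Matrix (Fin d) (Fin d) ℂ) * star (u : Matrix (Fin d) (Fin d) ℂ) = 1 :=
  Unitary.coe_mul_star_self u

lemma unit_star_mul {d : ℕ} (u : Matrix.unitaryGroup (Fin d) ℂ) :
    star (u : Matrix (Fin d) (Fin d) ℂ) * (u : Matrix (Fin d) (Fin d) ℂ) = 1 :=
  Unitary.coe_star_mul_self u

/-- Conjugating a quadratic form. -/
lemma dot_conj {a b : ℕ} (M : Matrix (Fin a) (Fin b) ℂ) (D : Matrix (Fin a) (Fin a) ℂ)
    (y : Fin b → ℂ) :
    star y ⬝ᵥ (Mᴴ * D * M) *ᵥ y = star (M *ᵥ y) ⬝ᵥ D *ᵥ (M *ᵥ y) := by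
  rw [← mulVec_mulVec, ← mulVec_mulVec, dotProduct_mulVec (star y), ← star_mulVec,
    mulVec_mulVec]

lemma dot_diag_re {m : ℕ} (lam : Fin m → ℝ) (z : Fin m → ℂ) :
    (star z ⬝ᵥ (Matrix.diagonal (fun i => ((lam i : ℝ) : ℂ))) *ᵥ z).re
      = ∑ i, lam i * Complex.normSq (z i) := by
  have : ∀ (r : ℝ) (w : ℂ), ((starRingEnd ℂ) w * ((r : ℂ) * w)).re = r * Complex.normSq w := by
    intro r w
    simp [Complex.normSq_apply, Complex.mul_re, Complex.mul_im]
    ring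
  simp only [dotProduct, Pi.star_apply, mulVec_diagonal, Complex.re_sum, RCLike.star_def]
  exact Finset.sum_congr rfl fun i _ => this _ _

lemma dot_self_re {m : ℕ} (z : Fin m → ℂ) :
    (star z ⬝ᵥ z).re = ∑ i, Complex.normSq (z i) := by
  simp only [dotProduct, Pi.star_apply, Complex.re_sum, RCLike.star_def]
  exact Finset.sum_congr rfl fun i _ => by
    simp [Complex.normSq_apply, Complex.mul_re]

/-- Quadratic form of a Hermitian matrix through its spectral decomposition. -/
lemma quad_repr {m : ℕ} {C : Matrix (Fin m) (Fin m) ℂ} (hC : C.IsHermitian) (y : Fin m → ℂ) :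
    (star y ⬝ᵥ C *ᵥ y).re
        = ∑ i, hC.eigenvalues i
            * Complex.normSq ((star (hC.eigenvectorUnitary : Matrix (Fin m) (Fin m) ℂ) *ᵥ y) i)
      ∧ (star y ⬝ᵥ y).re
        = ∑ i, Complex.normSq ((star (hC.eigenvectorUnitary : Matrix (Fin m) (Fin m) ℂ) *ᵥ y) i) := by
  set U : Matrix (Fin m) (Fin m) ℂ := (hC.eigenvectorUnitary : Matrix (Fin m) (Fin m) ℂ) with hU
  have hUH : (star U)ᴴ = U := by
    simp [Matrix.star_eq_conjTranspose]
  constructor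
  · have h1 : C = (star U)ᴴ * (diagonal (RCLike.ofReal ∘ hC.eigenvalues)) * (star U) := by
      rw [hUH]; exact hC.spectral_theorem
    conv_lhs => rw [h1]
    rw [dot_conj]
    exact dot_diag_re _ _
  · have h2 : star y ⬝ᵥ y = star (star U *ᵥ y) ⬝ᵥ (star U *ᵥ y) := by
      have h3 : (1 : Matrix (Fin m) (Fin m) ℂ) = (star U)ᴴ * 1 * (star U) := by
        rw [mul_one, hUH]
        exact (unit_mul_star hC.eigenvectorUnitary).symm
      calc star y ⬝ᵥ y = star y ⬝ᵥ (1 : Matrix (Fin m) (Fin m) ℂ) *ᵥ y := by rw [one_mulVec]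
        _ = star y ⬝ᵥ ((star U)ᴴ * 1 * (star U)) *ᵥ y := by rw [← h3]
        _ = star (star U *ᵥ y) ⬝ᵥ (1 : Matrix (Fin m) (Fin m) ℂ) *ᵥ (star U *ᵥ y) := dot_conj _ _ _
        _ = star (star U *ᵥ y) ⬝ᵥ (star U *ᵥ y) := by rw [one_mulVec]
    rw [h2]
    exact dot_self_re _

lemma exists_eigenvalue_ge {m : ℕ} {C : Matrix (Fin m) (Fin m) ℂ} (hC : C.IsHermitian)
    {y : Fin m → ℂ} (hy : y ≠ 0) {c : ℝ}
    (h : c * (star y ⬝ᵥ y).re ≤ (star y ⬝ᵥ C *ᵥ y).re) :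
    ∃ i, c ≤ hC.eigenvalues i := by
  by_contra hcon
  push_neg at hcon
  obtain ⟨h1, h2⟩ := quad_repr hC y
  set w : Fin m → ℂ := star (hC.eigenvectorUnitary : Matrix (Fin m) (Fin m) ℂ) *ᵥ y with hw
  have hypos : 0 < (star y ⬝ᵥ y).re := by
    rw [dot_self_re]
    obtain ⟨i, hi⟩ := Function.ne_iff.mp hy
    exact Finset.sum_pos' (fun j _ => Complex.normSq_nonneg _)
      ⟨i, Finset.mem_univ i, Complex.normSq_pos.mpr (by simpa using hi)⟩
  have hwpos : 0 < ∑ i, Complex.normSq (w i) := by rw [← h2]; exact hypos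
  obtain ⟨i0, -, hi0⟩ : ∃ i ∈ Finset.univ, 0 < Complex.normSq (w i) := by
    by_contra hall
    push_neg at hall
    have : ∑ i, Complex.normSq (w i) ≤ 0 :=
      Finset.sum_nonpos fun i _ => hall i (Finset.mem_univ i)
    linarith
  have hlt : ∑ i, hC.eigenvalues i * Complex.normSq (w i)
      < ∑ i, c * Complex.normSq (w i) := by
    refine Finset.sum_lt_sum (fun i _ => ?_) ⟨i0, Finset.mem_univ i0, ?_⟩
    · exact mul_le_mul_of_nonneg_right (hcon i).le (Complex.normSq_nonneg _)
    · exact mul_lt_mul_of_pos_right (hcon i0) hi0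
  rw [← Finset.mul_sum] at hlt
  rw [h1, h2] at h
  linarith

lemma reTrace_matExp {m : ℕ} {C : Matrix (Fin m) (Fin m) ℂ} (hC : C.IsHermitian) :
    reTrace (matExp C) = ∑ i, Real.exp (hC.eigenvalues i) := by
  rw [matExp, dif_pos hC]
  rw [reTrace, Matrix.trace_mul_comm, ← mul_assoc, unit_star_mul, one_mul,
    Matrix.trace_diagonal]
  simp [Complex.exp_ofReal_re]

lemma exp_le_reTrace_matExp {m : ℕ} {C : Matrix (Fin m) (Fin m) ℂ} (hC : C.IsHermitian)
    {c : ℝ} (h : ∃ i, c ≤ hC.eigenvalues i) :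
    Real.exp c ≤ reTrace (matExp C) := by
  obtain ⟨i0, hi0⟩ := h
  rw [reTrace_matExp hC]
  calc Real.exp c ≤ Real.exp (hC.eigenvalues i0) := Real.exp_le_exp.mpr hi0
    _ ≤ ∑ i, Real.exp (hC.eigenvalues i) :=
      Finset.single_le_sum (fun i _ => (Real.exp_pos _).le) (Finset.mem_univ i0)

/-- At least `k` eigenvalues are at least `lambdaK k A`. -/
lemma card_filter_lambdaK {n k : ℕ} {A : Matrix (Fin n) (Fin n) ℂ} (hA : A.IsHermitian)
    (hk1 : 1 ≤ k) (hkn : k ≤ n) :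
    k ≤ (Finset.univ.filter fun i => lambdaK k A ≤ hA.eigenvalues i).card := by
  classical
  set L : List ℝ := Multiset.sort (↑(List.ofFn hA.eigenvalues) : Multiset ℝ) (· ≤ ·) with hL
  have hlen : L.length = n := by
    rw [hL, Multiset.length_sort]
    simp
  have hidx : n - k < L.length := by
    rw [hlen]; omega
  set c : ℝ := L[n - k]'hidx with hcdef
  have hc : lambdaK k A = c := by
    rw [lambdaK, dif_pos hA]
    exact List.getD_eq_getElem L 0 hidx
  have hsorted : L.Pairwise (· ≤ ·) := Multiset.pairwise_sort _ _
  have hdropP : ∀ a ∈ L.drop (n - k), c ≤ a := by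
    intro a ha
    obtain ⟨j, hj, rfl⟩ := List.mem_iff_getElem.mp ha
    have hlen2 : n - k + j < L.length := by
      rw [List.length_drop] at hj; omega
    have hEq : (L.drop (n - k))[j] = L[n - k + j]'hlen2 := List.getElem_drop ..
    rw [hEq]
    have := hsorted.rel_get_of_le (a := ⟨n - k, hidx⟩) (b := ⟨n - k + j, hlen2⟩)
      (by simp [Fin.le_def])
    simpa [List.get_eq_getElem] using this
  have hdropcount : (L.drop (n - k)).countP (fun x => decide (c ≤ x)) = k := by
    rw [List.countP_eq_length.mpr (fun a ha => decide_eq_true (hdropP a ha))]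
    rw [List.length_drop, hlen]; omega
  have hcount : k ≤ L.countP (fun x => decide (c ≤ x)) := by
    conv_rhs => rw [← List.take_append_drop (n - k) L]
    rw [List.countP_append, hdropcount]
    omega
  have htrans : (Finset.univ.filter fun i => c ≤ hA.eigenvalues i).card
      = L.countP (fun x => decide (c ≤ x)) := by
    have h1 : (Finset.univ.filter fun i => c ≤ hA.eigenvalues i).card
        = Multiset.countP (fun x => c ≤ x) (Multiset.map hA.eigenvalues Finset.univ.val) := by
      rw [Multiset.countP_map]
      rfl
    have h2 : Multiset.map hA.eigenvalues Finset.univ.val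
        = (↑(List.ofFn hA.eigenvalues) : Multiset ℝ) := by
      rw [List.ofFn_eq_map, Fin.univ_def]
      rfl
    have h3 : (↑(List.ofFn hA.eigenvalues) : Multiset ℝ) = (↑L : Multiset ℝ) :=
      (Multiset.sort_eq _ _).symm
    rw [h1, h2, h3, Multiset.coe_countP]
  rw [hc, htrans]
  exact hcount

/-- Dimension-counting: a test vector in the range of `V` lying in the span of the top
eigenvectors. -/
lemma exists_test_vector {n d k : ℕ} {A : Matrix (Fin n) (Fin n) ℂ} (hA : A.IsHermitian)
    {V : Matrix (Fin n) (Fin d) ℂ} (hV : Vᴴ * V = 1) {c : ℝ}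
    (hcard : k ≤ (Finset.univ.filter fun i => c ≤ hA.eigenvalues i).card)
    (hd : n < d + k) :
    ∃ y : Fin d → ℂ, y ≠ 0 ∧
      c * (star y ⬝ᵥ y).re ≤ (star y ⬝ᵥ (Vᴴ * A * V) *ᵥ y).re := by
  classical
  set U : Matrix (Fin n) (Fin n) ℂ := (hA.eigenvectorUnitary : Matrix (Fin n) (Fin n) ℂ) with hUdef
  set M : Matrix (Fin n) (Fin d) ℂ := star U * V with hMdef
  set S : Finset (Fin n) := Finset.univ.filter fun i => c ≤ hA.eigenvalues i with hSdef
  let T : (Fin d → ℂ) →ₗ[ℂ] ((Sᶜ : Finset (Fin n)) → ℂ) :=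
    (LinearMap.funLeft ℂ ℂ (fun i : (Sᶜ : Finset (Fin n)) => (i : Fin n))).comp M.mulVecLin
  have hT : ¬ Function.Injective T := by
    intro hinj
    have hle := LinearMap.finrank_le_finrank_of_injective hinj
    have hr1 : Module.finrank ℂ (Fin d → ℂ) = d := by
      rw [Module.finrank_pi ℂ, Fintype.card_fin]
    have hr2 : Module.finrank ℂ ((Sᶜ : Finset (Fin n)) → ℂ) = (Sᶜ : Finset (Fin n)).card := by
      rw [Module.finrank_pi ℂ, Fintype.card_coe]
    rw [hr1, hr2] at hle
    have hSc : (Sᶜ : Finset (Fin n)).card = n - S.card := by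
      simp [Finset.card_compl]
    have hSn : S.card ≤ n := by
      simpa using Finset.card_le_card (Finset.subset_univ S)
    omega
  obtain ⟨a, b, hab, hne⟩ := Function.not_injective_iff.mp hT
  refine ⟨a - b, sub_ne_zero.mpr hne, ?_⟩
  set y : Fin d → ℂ := a - b with hydef
  have hTy : T y = 0 := by
    rw [hydef, map_sub, hab, sub_self]
  set z : Fin n → ℂ := M *ᵥ y with hzdef
  have hz : ∀ i : Fin n, i ∉ S → z i = 0 := by
    intro i hi
    have : (⟨i, Finset.mem_compl.mpr hi⟩ : (Sᶜ : Finset (Fin n))) ∈ Finset.univ := Finset.mem_univ _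
    have := congrFun hTy ⟨i, Finset.mem_compl.mpr hi⟩
    simpa [T, LinearMap.funLeft] using this
  have hMH : Mᴴ = Vᴴ * U := by
    rw [hMdef, conjTranspose_mul]
    simp [Matrix.star_eq_conjTranspose]
  have hVAV : Vᴴ * A * V = Mᴴ * (diagonal (RCLike.ofReal ∘ hA.eigenvalues) : Matrix (Fin n) (Fin n) ℂ) * M := by
    conv_lhs => rw [hA.spectral_theorem, Unitary.conjStarAlgAut_apply]
    rw [hMH, hMdef, ← hUdef]
    simp only [Matrix.mul_assoc]
  have key1 : star y ⬝ᵥ (Vᴴ * A * V) *ᵥ y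
      = star z ⬝ᵥ (diagonal (RCLike.ofReal ∘ hA.eigenvalues)) *ᵥ z := by
    rw [hVAV, dot_conj, hzdef]
  have hMM : Mᴴ * M = 1 := by
    have h2 : U * star U = 1 := unit_mul_star hA.eigenvectorUnitary
    rw [hMH, hMdef]
    calc Vᴴ * U * (star U * V) = Vᴴ * (U * star U) * V := by simp only [Matrix.mul_assoc]
      _ = Vᴴ * V := by rw [h2, Matrix.mul_one]
      _ = 1 := hV
  have key2 : star y ⬝ᵥ y = star z ⬝ᵥ z := by
    have h4 := dot_conj M (1 : Matrix (Fin n) (Fin n) ℂ) y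
    rw [Matrix.mul_one, hMM, one_mulVec, one_mulVec] at h4
    exact h4
  have hdiag : (star z ⬝ᵥ (diagonal (RCLike.ofReal ∘ hA.eigenvalues)) *ᵥ z).re
      = ∑ i, hA.eigenvalues i * Complex.normSq (z i) := dot_diag_re _ _
  have hsum1 : ∑ i, hA.eigenvalues i * Complex.normSq (z i)
      = ∑ i ∈ S, hA.eigenvalues i * Complex.normSq (z i) := by
    refine (Finset.sum_subset (Finset.subset_univ S) ?_).symm
    intro i _ hi
    rw [hz i hi]
    simp
  have hsum2 : ∑ i, Complex.normSq (z i) = ∑ i ∈ S, Complex.normSq (z i) := by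
    refine (Finset.sum_subset (Finset.subset_univ S) ?_).symm
    intro i _ hi
    rw [hz i hi]
    simp
  have hbound : c * ∑ i, Complex.normSq (z i)
      ≤ ∑ i, hA.eigenvalues i * Complex.normSq (z i) := by
    rw [hsum1, hsum2, Finset.mul_sum]
    refine Finset.sum_le_sum fun i hi => ?_
    have hci : c ≤ hA.eigenvalues i := (Finset.mem_filter.mp hi).2
    exact mul_le_mul_of_nonneg_right hci (Complex.normSq_nonneg _)
  rw [key1, key2, hdiag, dot_self_re]
  exact hbound

/-- Key pointwise bound. -/
lemma exp_lambdaK_le {n d k : ℕ} (hk1 : 1 ≤ k) (hkn : k ≤ n) (hd : n < d + k)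
    {A : Matrix (Fin n) (Fin n) ℂ} (hA : A.IsHermitian)
    {V : Matrix (Fin n) (Fin d) ℂ} (hV : Vᴴ * V = 1) {θ : ℝ} (hθ : 0 < θ) :
    Real.exp (θ * lambdaK k A) ≤ reTrace (matExp (θ • (Vᴴ * A * V))) := by
  have hB : (Vᴴ * A * V).IsHermitian := isHermitian_conjTranspose_mul_mul V hA
  have hC : (θ • (Vᴴ * A * V)).IsHermitian := by
    rw [Matrix.IsHermitian, conjTranspose_smul, star_trivial, hB.eq]
  obtain ⟨y, hy0, hy⟩ := exists_test_vector hA hV (card_filter_lambdaK hA hk1 hkn) hd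
  apply exp_le_reTrace_matExp hC
  apply exists_eigenvalue_ge hC hy0
  have h1 : star y ⬝ᵥ (θ • (Vᴴ * A * V)) *ᵥ y = θ • (star y ⬝ᵥ (Vᴴ * A * V) *ᵥ y) := by
    rw [smul_mulVec, dotProduct_smul]
  rw [h1]
  have : (θ • (star y ⬝ᵥ (Vᴴ * A * V) *ᵥ y)).re = θ * (star y ⬝ᵥ (Vᴴ * A * V) *ᵥ y).re := by
    simp
  rw [this, mul_assoc]
  exact mul_le_mul_of_nonneg_left hy hθ.le

/-- `matExp` agrees with the analytic exponential on Hermitian matrices. -/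
lemma matExp_eq_exp {d : ℕ} {C : Matrix (Fin d) (Fin d) ℂ} (hC : C.IsHermitian) :
    matExp C = NormedSpace.exp C := by
  rw [matExp, dif_pos hC]
  set U : Matrix (Fin d) (Fin d) ℂ := (hC.eigenvectorUnitary : Matrix (Fin d) (Fin d) ℂ) with hUdef
  have h1 : star U * U = 1 := unit_star_mul hC.eigenvectorUnitary
  have h2 : U * star U = 1 := unit_mul_star hC.eigenvectorUnitary
  have hU : IsUnit U := ⟨⟨U, star U, h2, h1⟩, rfl⟩
  have hUinv : U⁻¹ = star U := Matrix.inv_eq_left_inv h1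
  conv_rhs => rw [hC.spectral_theorem, Unitary.conjStarAlgAut_apply, ← hUinv]
  rw [Matrix.exp_conj U _ hU, Matrix.exp_diagonal, hUinv]
  congr 2
  refine congrArg diagonal (funext fun i => ?_)
  rw [Pi.exp_def]
  show ((Real.exp (hC.eigenvalues i) : ℝ) : ℂ)
    = NormedSpace.exp ((hC.eigenvalues i : ℝ) : ℂ)
  rw [← Complex.exp_eq_exp_ℂ, ← Complex.ofReal_exp]

lemma measurable_pow_entry {Ω : Type*} [MeasurableSpace Ω] {d : ℕ}
    {C : Ω → Matrix (Fin d) (Fin d) ℂ} (hC : ∀ i j, Measurable fun ω => C ω i j) (m : ℕ) :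
    ∀ i j, Measurable fun ω => (C ω ^ m) i j := by
  induction m with
  | zero =>
    intro i j
    simp only [pow_zero]
    exact measurable_const
  | succ m ih =>
    intro i j
    simp only [pow_succ, Matrix.mul_apply]
    exact Finset.measurable_sum _ fun l _ => (ih i l).mul (hC l j)

lemma measurable_exp_entry {Ω : Type*} [MeasurableSpace Ω] {d : ℕ}
    {C : Ω → Matrix (Fin d) (Fin d) ℂ} (hC : ∀ i j, Measurable fun ω => C ω i j) (i j : Fin d) :
    Measurable fun ω => (NormedSpace.exp (C ω)) i j := by
  have htend : ∀ x : Matrix (Fin d) (Fin d) ℂ,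
      Filter.Tendsto (fun N => (∑ m ∈ Finset.range N, (m.factorial : ℂ)⁻¹ • x ^ m) i j)
        Filter.atTop (nhds ((NormedSpace.exp x) i j)) := by
    intro x
    letI : SeminormedRing (Matrix (Fin d) (Fin d) ℂ) := Matrix.linftyOpSemiNormedRing
    letI : NormedRing (Matrix (Fin d) (Fin d) ℂ) := Matrix.linftyOpNormedRing
    letI : NormedAlgebra ℂ (Matrix (Fin d) (Fin d) ℂ) := Matrix.linftyOpNormedAlgebra
    have h := (NormedSpace.expSeries_summable' (𝕂 := ℂ) x).hasSum.tendsto_sum_nat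
    have h2 := ((continuous_apply j).comp (continuous_apply i)).continuousAt.tendsto.comp h
    rw [NormedSpace.exp_eq_tsum (𝕂 := ℂ)]
    exact h2
  have hmeas : ∀ N : ℕ,
      Measurable fun ω => (∑ m ∈ Finset.range N, (m.factorial : ℂ)⁻¹ • C ω ^ m) i j := by
    intro N
    have hfe : (fun ω => (∑ m ∈ Finset.range N, (m.factorial : ℂ)⁻¹ • C ω ^ m) i j)
        = fun ω => ∑ m ∈ Finset.range N, (m.factorial : ℂ)⁻¹ * (C ω ^ m) i j := by
      funext ω
      simp [Matrix.sum_apply, Matrix.smul_apply]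
    rw [hfe]
    exact Finset.measurable_sum _ fun m _ =>
      (measurable_pow_entry hC m i j).const_mul _
  exact measurable_of_tendsto_metrizable hmeas
    (tendsto_pi_nhds.mpr fun ω => htend (C ω))

lemma measurable_reTrace_matExp {Ω : Type*} [MeasurableSpace Ω] {n d : ℕ} (θ : ℝ)
    (V : Matrix (Fin n) (Fin d) ℂ) (hV : Vᴴ * V = 1)
    (X : Ω → Matrix (Fin n) (Fin n) ℂ) (hX : Measurable X) (hsa : ∀ ω, (X ω).IsHermitian) :
    Measurable fun ω => reTrace (matExp (θ • (Vᴴ * X ω * V))) := by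
  have hXe : ∀ a b, Measurable fun ω => X ω a b := fun a b =>
    (measurable_pi_apply b).comp ((measurable_pi_apply a).comp hX)
  have hCe : ∀ i j, Measurable fun ω => (θ • (Vᴴ * X ω * V)) i j := by
    intro i j
    have hrw : ∀ ω, (θ • (Vᴴ * X ω * V)) i j
        = (θ : ℂ) * ∑ b, (∑ a, Vᴴ i a * X ω a b) * V b j := by
      intro ω
      simp [Matrix.smul_apply, Matrix.mul_apply, Complex.real_smul]
    have hm : Measurable fun ω => ∑ b, (∑ a, Vᴴ i a * X ω a b) * V b j :=
      Finset.measurable_sum _ fun b _ =>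
        (Finset.measurable_sum _ fun a _ => (hXe a b).const_mul (Vᴴ i a)).mul_const (V b j)
    simpa only [hrw] using hm.const_mul ((θ : ℂ))
  have heq : ∀ ω, matExp (θ • (Vᴴ * X ω * V)) = NormedSpace.exp (θ • (Vᴴ * X ω * V)) := by
    intro ω
    have hB : (Vᴴ * X ω * V).IsHermitian := isHermitian_conjTranspose_mul_mul V (hsa ω)
    have hC : (θ • (Vᴴ * X ω * V)).IsHermitian := by
      rw [Matrix.IsHermitian, conjTranspose_smul, star_trivial, hB.eq]
    exact matExp_eq_exp hC
  have hfun : (fun ω => reTrace (matExp (θ • (Vᴴ * X ω * V))))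
      = fun ω => reTrace (NormedSpace.exp (θ • (Vᴴ * X ω * V))) :=
    funext fun ω => by rw [heq ω]
  rw [hfun]
  have hre : ∀ M : Matrix (Fin d) (Fin d) ℂ, reTrace M = ∑ i, (M i i).re := by
    intro M
    rw [reTrace, Matrix.trace]
    rw [show (RCLike.re : ℂ →+ ℝ) = Complex.reAddGroupHom from rfl]
    rw [map_sum]
    rfl
  simp only [hre]
  exact Finset.measurable_sum _ fun i _ =>
    Complex.measurable_re.comp (measurable_exp_entry hCe i i)

end Aux

theorem minimax_laplace_transform_single
    {Ω : Type*} [MeasurableSpace Ω] (μ : Measure Ω) [IsProbabilityMeasure μ]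
    {n : ℕ} (X : Ω → Matrix (Fin n) (Fin n) ℂ)
    (hXmeas : Measurable X) (hXsa : ∀ ω, (X ω).IsHermitian)
    (k : ℕ) (hk1 : 1 ≤ k) (hkn : k ≤ n) (t : ℝ) :
    μ {ω | t ≤ lambdaK k (X ω)} ≤
      ⨅ θ : {x : ℝ // 0 < x}, ⨅ V : Stiefel ℂ (n - k + 1) n,
        ENNReal.ofReal (Real.exp (-(θ : ℝ) * t)) *
          ∫⁻ ω, ENNReal.ofReal (reTrace (matExp ((θ : ℝ) • (V.1ᴴ * X ω * V.1)))) ∂μ := by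
  refine le_iInf fun θ => le_iInf fun V => ?_
  set f : Ω → ℝ≥0∞ :=
    fun ω => ENNReal.ofReal (reTrace (matExp ((θ : ℝ) • (V.1ᴴ * X ω * V.1)))) with hf
  have hfmeas : Measurable f :=
    (measurable_reTrace_matExp (θ : ℝ) V.1 V.2 X hXmeas hXsa).ennreal_ofReal
  have hd : n < (n - k + 1) + k := by omega
  have hsubset : {ω | t ≤ lambdaK k (X ω)}
      ⊆ {ω | ENNReal.ofReal (Real.exp ((θ : ℝ) * t)) ≤ f ω} := by
    intro ω hω
    have h1 : Real.exp ((θ : ℝ) * t) ≤ Real.exp ((θ : ℝ) * lambdaK k (X ω)) :=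
      Real.exp_le_exp.mpr (mul_le_mul_of_nonneg_left hω θ.2.le)
    have h2 := exp_lambdaK_le hk1 hkn hd (hXsa ω) V.2 θ.2
    exact ENNReal.ofReal_le_ofReal (h1.trans h2)
  have hmarkov := mul_meas_ge_le_lintegral₀ (μ := μ) hfmeas.aemeasurable
    (ENNReal.ofReal (Real.exp ((θ : ℝ) * t)))
  have hmono : μ {ω | t ≤ lambdaK k (X ω)}
      ≤ μ {ω | ENNReal.ofReal (Real.exp ((θ : ℝ) * t)) ≤ f ω} := measure_mono hsubset
  have hcancel : ENNReal.ofReal (Real.exp (-(θ : ℝ) * t))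
      * ENNReal.ofReal (Real.exp ((θ : ℝ) * t)) = 1 := by
    rw [← ENNReal.ofReal_mul (Real.exp_pos _).le, ← Real.exp_add]
    simp
  calc μ {ω | t ≤ lambdaK k (X ω)}
      = ENNReal.ofReal (Real.exp (-(θ : ℝ) * t))
        * (ENNReal.ofReal (Real.exp ((θ : ℝ) * t)) * μ {ω | t ≤ lambdaK k (X ω)}) := by
        rw [← mul_assoc, hcancel, one_mul]
    _ ≤ ENNReal.ofReal (Real.exp (-(θ : ℝ) * t))
        * (ENNReal.ofReal (Real.exp ((θ : ℝ) * t))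
          * μ {ω | ENNReal.ofReal (Real.exp ((θ : ℝ) * t)) ≤ f ω}) := by
        exact mul_le_mul_right (mul_le_mul_right hmono _) _
    _ ≤ ENNReal.ofReal (Real.exp (-(θ : ℝ) * t)) * ∫⁻ ω, f ω ∂μ :=
        mul_le_mul_right hmarkov _
end Paper
end
end

section
/- Let G be a positive-semidefinite p×p real symmetric matrix and let ξ be a random vector in ℝ^p with distribution N(0, G). Then for every integer m ≥ 2, one has the semidefinite inequality E[(ξ ξ^T)^m] ⪯ 2^m · m! · (tr G)^{m−1} · G. -/
open MeasureTheory ProbabilityTheory Matrix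
open scoped ENNReal NNReal ComplexOrder

noncomputable section

namespace Paper

/-- `ν` is the centered Gaussian measure on `ℝ^p` with covariance matrix `C`,
characterized by its one-dimensional projections. -/
def IsCenteredGaussian {p : ℕ} (C : Matrix (Fin p) (Fin p) ℝ)
    (ν : Measure (Fin p → ℝ)) : Prop :=
  ∀ u : Fin p → ℝ,
    ν.map (fun x => ∑ i, u i * x i) = gaussianReal 0 (Real.toNNReal (u ⬝ᵥ C *ᵥ u))


/-! ### Auxiliary lemmas for `wishart_moment_bound` -/

section WishartAux

open Real

/-- AM-GM: product of `n` nonnegative reals is at most the mean of their `n`-th powers. -/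
private lemma prod_le_sum_pow {n : ℕ} (hn : 1 ≤ n) (a : Fin n → ℝ) (ha : ∀ j, 0 ≤ a j) :
    ∏ j, a j ≤ (∑ j, (a j) ^ n) / n := by
  have hn0 : (n : ℝ) ≠ 0 := by positivity
  have h := Real.geom_mean_le_arith_mean_weighted Finset.univ (fun _ => (1 : ℝ) / n)
    (fun j => (a j) ^ n) (fun i _ => div_nonneg zero_le_one (Nat.cast_nonneg n))
    (by simp [Finset.sum_const, Finset.card_univ]; field_simp)
    (fun i _ => pow_nonneg (ha i) n)
  have hL : ∀ j : Fin n, ((a j) ^ n : ℝ) ^ ((1 : ℝ) / n) = a j := by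
    intro j
    rw [← Real.rpow_natCast (a j) n, ← Real.rpow_mul (ha j)]
    rw [mul_one_div, div_self hn0, Real.rpow_one]
  calc ∏ j, a j = ∏ j, ((a j) ^ n : ℝ) ^ ((1 : ℝ) / n) := by
        exact (Finset.prod_congr rfl fun j _ => hL j).symm
    _ ≤ ∑ j, (1 : ℝ) / n * (a j) ^ n := h
    _ = (∑ j, (a j) ^ n) / n := by
        rw [← Finset.mul_sum, one_div, inv_mul_eq_div]

private lemma integrable_pow_mul_gauss {b : ℝ} (hb : 0 < b) (k : ℕ) :
    Integrable (fun x : ℝ => x ^ k * Real.exp (-b * x ^ 2)) := by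
  have hs : (-1 : ℝ) < (k : ℝ) := lt_of_lt_of_le neg_one_lt_zero (Nat.cast_nonneg k)
  simpa [Real.rpow_natCast] using integrable_rpow_mul_exp_neg_mul_sq hb hs

private lemma gauss_moment_rec {b : ℝ} (hb : 0 < b) (k : ℕ) :
    ∫ x : ℝ, x ^ (2 * (k + 1)) * Real.exp (-b * x ^ 2)
      = ((2 * k + 1 : ℝ) / (2 * b)) * ∫ x : ℝ, x ^ (2 * k) * Real.exp (-b * x ^ 2) := by
  set f : ℝ → ℝ := fun x => x ^ (2 * k + 1) * Real.exp (-b * x ^ 2) with hf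
  set f' : ℝ → ℝ := fun x =>
    (2 * k + 1 : ℝ) * (x ^ (2 * k) * Real.exp (-b * x ^ 2))
      + (-(2 * b)) * (x ^ (2 * (k + 1)) * Real.exp (-b * x ^ 2)) with hf'
  have hderiv : ∀ x : ℝ, HasDerivAt f (f' x) x := by
    intro x
    have h1 : HasDerivAt (fun x : ℝ => x ^ (2 * k + 1))
        ((2 * k + 1 : ℝ) * x ^ (2 * k)) x := by
      simpa using hasDerivAt_pow (2 * k + 1) x
    have h2 : HasDerivAt (fun x : ℝ => Real.exp (-b * x ^ 2))
        (Real.exp (-b * x ^ 2) * (-b * (2 * x))) x := by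
      have h3 : HasDerivAt (fun x : ℝ => -b * x ^ 2) (-b * (2 * x)) x := by
        simpa using (hasDerivAt_pow 2 x).const_mul (-b)
      exact h3.exp
    have := h1.mul h2
    refine this.congr_deriv ?_
    simp only [hf']
    ring
  have hfint : Integrable f := integrable_pow_mul_gauss hb (2 * k + 1)
  have hf'int : Integrable f' :=
    ((integrable_pow_mul_gauss hb (2 * k)).const_mul _).add
      ((integrable_pow_mul_gauss hb (2 * (k + 1))).const_mul _)
  have h0 : ∫ x, f' x = 0 :=
    integral_eq_zero_of_hasDerivAt_of_integrable hderiv hf'int hfint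
  rw [hf'] at h0
  rw [integral_add ((integrable_pow_mul_gauss hb (2 * k)).const_mul _)
    ((integrable_pow_mul_gauss hb (2 * (k + 1))).const_mul _),
    integral_const_mul, integral_const_mul] at h0
  have hb0 : (2 * b) ≠ 0 := by positivity
  rw [div_mul_eq_mul_div, eq_div_iff hb0]
  linarith

private lemma gauss_even_moment_le {b : ℝ} (hb : 0 < b) (k : ℕ) :
    ∫ x : ℝ, x ^ (2 * k) * Real.exp (-b * x ^ 2)
      ≤ ((k.factorial : ℝ) / b ^ k) * ∫ x : ℝ, Real.exp (-b * x ^ 2) := by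
  induction k with
  | zero => simp
  | succ k ih =>
    have hnn : 0 ≤ ∫ x : ℝ, x ^ (2 * k) * Real.exp (-b * x ^ 2) :=
      integral_nonneg fun x => by rw [pow_mul]; positivity
    rw [gauss_moment_rec hb k]
    calc ((2 * k + 1 : ℝ) / (2 * b)) * ∫ x : ℝ, x ^ (2 * k) * Real.exp (-b * x ^ 2)
        ≤ ((2 * k + 2 : ℝ) / (2 * b)) * ∫ x : ℝ, x ^ (2 * k) * Real.exp (-b * x ^ 2) := by
          exact mul_le_mul_of_nonneg_right
            ((div_le_div_iff_of_pos_right (by positivity)).mpr (by linarith)) hnn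
      _ = (((k : ℝ) + 1) / b) * ∫ x : ℝ, x ^ (2 * k) * Real.exp (-b * x ^ 2) := by
          have : ((2 * k + 2 : ℝ) / (2 * b)) = ((k : ℝ) + 1) / b := by
            field_simp
          rw [this]
      _ ≤ (((k : ℝ) + 1) / b) * (((k.factorial : ℝ) / b ^ k) * ∫ x : ℝ, Real.exp (-b * x ^ 2)) := by
          exact mul_le_mul_of_nonneg_left ih (by positivity)
      _ = (((k + 1).factorial : ℝ) / b ^ (k + 1)) * ∫ x : ℝ, Real.exp (-b * x ^ 2) := by
          rw [Nat.factorial_succ]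
          push_cast
          field_simp
          ring

private lemma gaussianReal_even_moment (v : ℝ≥0) (n : ℕ) :
    Integrable (fun x : ℝ => x ^ (2 * n)) (gaussianReal 0 v) ∧
    ∫ x, x ^ (2 * n) ∂(gaussianReal 0 v) ≤ 2 ^ n * (n.factorial : ℝ) * (v : ℝ) ^ n := by
  rcases eq_or_ne v 0 with hv | hv
  · subst hv
    rw [gaussianReal_zero_var]
    constructor
    · exact (integrable_const ((0 : ℝ) ^ (2 * n))).congr
        (MeasureTheory.ae_eq_dirac (fun x : ℝ => x ^ (2 * n))).symm
    · rw [integral_dirac]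
      cases n with
      | zero => simp
      | succ n => simp [pow_succ, Nat.mul_succ]
  · have hvR : 0 < (v : ℝ) := by positivity
    set b : ℝ := (2 * (v : ℝ))⁻¹ with hbdef
    have hb : 0 < b := by positivity
    have hc : 0 ≤ (Real.sqrt (2 * π * v))⁻¹ := by positivity
    have hpdf : ∀ x : ℝ, gaussianPDFReal 0 v x
        = (Real.sqrt (2 * π * v))⁻¹ * Real.exp (-b * x ^ 2) := by
      intro x
      rw [gaussianPDFReal]
      congr 1
      rw [hbdef]
      ring
    have hmap : gaussianReal 0 v = volume.withDensity (gaussianPDF 0 v) :=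
      gaussianReal_of_var_ne_zero 0 hv
    have hden : gaussianPDF 0 v
        = fun x => (((gaussianPDFReal 0 v x).toNNReal : ℝ≥0) : ℝ≥0∞) := rfl
    have hmeasNN : Measurable fun x => (gaussianPDFReal 0 v x).toNNReal :=
      (measurable_gaussianPDFReal 0 v).real_toNNReal
    have hsmul : ∀ x : ℝ, ((gaussianPDFReal 0 v x).toNNReal : ℝ≥0) • (x ^ (2 * n))
        = (Real.sqrt (2 * π * v))⁻¹ * (x ^ (2 * n) * Real.exp (-b * x ^ 2)) := by
      intro x
      rw [NNReal.smul_def, smul_eq_mul, Real.coe_toNNReal _ (gaussianPDFReal_nonneg 0 v x),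
        hpdf x]
      ring
    constructor
    · rw [hmap, hden, integrable_withDensity_iff (hmeasNN.coe_nnreal_ennreal)
        (Filter.Eventually.of_forall fun x => ENNReal.coe_lt_top)]
      have : (fun x : ℝ => x ^ (2 * n) * (((gaussianPDFReal 0 v x).toNNReal : ℝ≥0) : ℝ≥0∞).toReal)
          = fun x : ℝ => (Real.sqrt (2 * π * v))⁻¹ * (x ^ (2 * n) * Real.exp (-b * x ^ 2)) := by
        funext x
        rw [ENNReal.coe_toReal, Real.coe_toNNReal _ (gaussianPDFReal_nonneg 0 v x), hpdf x]
        ring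
      rw [this]
      exact (integrable_pow_mul_gauss hb (2 * n)).const_mul _
    · rw [hmap, hden, integral_withDensity_eq_integral_smul hmeasNN]
      calc ∫ x, ((gaussianPDFReal 0 v x).toNNReal : ℝ≥0) • (x ^ (2 * n))
          = ∫ x, (Real.sqrt (2 * π * v))⁻¹ * (x ^ (2 * n) * Real.exp (-b * x ^ 2)) := by
            exact integral_congr_ae (Filter.Eventually.of_forall fun x => hsmul x)
        _ = (Real.sqrt (2 * π * v))⁻¹ * ∫ x, x ^ (2 * n) * Real.exp (-b * x ^ 2) :=
            integral_const_mul _ _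
        _ ≤ (Real.sqrt (2 * π * v))⁻¹ * (((n.factorial : ℝ) / b ^ n) * ∫ x, Real.exp (-b * x ^ 2)) :=
            mul_le_mul_of_nonneg_left (gauss_even_moment_le hb n) hc
        _ = ((n.factorial : ℝ) / b ^ n) * ∫ x, (Real.sqrt (2 * π * v))⁻¹ * Real.exp (-b * x ^ 2) := by
            rw [integral_const_mul]
            ring
        _ = ((n.factorial : ℝ) / b ^ n) * ∫ x, gaussianPDFReal 0 v x := by
            congr 1
            exact (integral_congr_ae (Filter.Eventually.of_forall fun x => (hpdf x).symm))
        _ = ((n.factorial : ℝ) / b ^ n) := by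
            rw [integral_gaussianPDFReal_eq_one 0 hv, mul_one]
        _ = 2 ^ n * (n.factorial : ℝ) * (v : ℝ) ^ n := by
            rw [hbdef, inv_pow, div_inv_eq_mul, mul_pow]
            ring

variable {Ω : Type*} [MeasurableSpace Ω] {μ : Measure Ω} [IsProbabilityMeasure μ]
  {p : ℕ} {G : Matrix (Fin p) (Fin p) ℝ} {ξ : Ω → (Fin p → ℝ)}

private lemma measurable_dotXi (hmeas : Measurable ξ) (w : Fin p → ℝ) :
    Measurable (fun ω => w ⬝ᵥ ξ ω) :=
  Finset.measurable_sum _ fun i _ => ((measurable_pi_apply i).comp hmeas).const_mul (w i)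

private lemma map_dotXi (hmeas : Measurable ξ) (hgauss : IsCenteredGaussian G (μ.map ξ))
    (w : Fin p → ℝ) :
    μ.map (fun ω => w ⬝ᵥ ξ ω) = gaussianReal 0 (Real.toNNReal (w ⬝ᵥ G *ᵥ w)) := by
  have hsum : Measurable (fun x : Fin p → ℝ => ∑ i, w i * x i) :=
    Finset.measurable_sum _ fun i _ => by fun_prop
  have h := hgauss w
  rw [Measure.map_map hsum hmeas] at h
  exact h

private lemma moment_dotXi (hG : G.PosSemidef) (hmeas : Measurable ξ)
    (hgauss : IsCenteredGaussian G (μ.map ξ)) (w : Fin p → ℝ) (n : ℕ) :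
    Integrable (fun ω => (w ⬝ᵥ ξ ω) ^ (2 * n)) μ ∧
    ∫ ω, (w ⬝ᵥ ξ ω) ^ (2 * n) ∂μ ≤ 2 ^ n * (n.factorial : ℝ) * (w ⬝ᵥ G *ᵥ w) ^ n := by
  have hσ : 0 ≤ w ⬝ᵥ G *ᵥ w := by simpa using hG.dotProduct_mulVec_nonneg w
  have hcoe : ((Real.toNNReal (w ⬝ᵥ G *ᵥ w)) : ℝ) = w ⬝ᵥ G *ᵥ w := Real.coe_toNNReal _ hσ
  have hlaw := map_dotXi hmeas hgauss w
  have hZ := measurable_dotXi hmeas w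
  have hfm : AEStronglyMeasurable (fun x : ℝ => x ^ (2 * n)) (μ.map (fun ω => w ⬝ᵥ ξ ω)) :=
    (measurable_id.pow_const (2 * n)).aestronglyMeasurable
  constructor
  · have h1 := (gaussianReal_even_moment (Real.toNNReal (w ⬝ᵥ G *ᵥ w)) n).1
    rw [← hlaw] at h1
    exact (integrable_map_measure hfm hZ.aemeasurable).mp h1
  · have h2 := (gaussianReal_even_moment (Real.toNNReal (w ⬝ᵥ G *ᵥ w)) n).2
    rw [← hlaw, integral_map hZ.aemeasurable hfm, hcoe] at h2
    exact h2

private lemma prod_moment_le (hG : G.PosSemidef) (hmeas : Measurable ξ)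
    (hgauss : IsCenteredGaussian G (μ.map ξ)) (n : ℕ) (hn : 1 ≤ n)
    (w : Fin n → (Fin p → ℝ)) :
    Integrable (fun ω => ∏ j, (w j ⬝ᵥ ξ ω) ^ 2) μ ∧
    ∫ ω, ∏ j, (w j ⬝ᵥ ξ ω) ^ 2 ∂μ
      ≤ 2 ^ n * (n.factorial : ℝ) * ∏ j, (w j ⬝ᵥ G *ᵥ w j) := by
  have hn0 : (n : ℝ) ≠ 0 := by positivity
  set σ : Fin n → ℝ := fun j => w j ⬝ᵥ G *ᵥ w j with hσdef
  have hσ : ∀ j, 0 ≤ σ j := fun j => by simpa using hG.dotProduct_mulVec_nonneg (w j)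
  have hPmeas : Measurable (fun ω => ∏ j, (w j ⬝ᵥ ξ ω) ^ 2) :=
    Finset.measurable_prod _ fun j _ => (measurable_dotXi hmeas (w j)).pow_const 2
  have hPnn : ∀ ω, 0 ≤ ∏ j, (w j ⬝ᵥ ξ ω) ^ 2 := fun ω =>
    Finset.prod_nonneg fun j _ => sq_nonneg _
  by_cases hz : ∃ j0, σ j0 = 0
  · obtain ⟨j0, hj0⟩ := hz
    have hlaw := map_dotXi hmeas hgauss (w j0)
    rw [show w j0 ⬝ᵥ G *ᵥ w j0 = σ j0 from rfl, hj0] at hlaw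
    simp only [Real.toNNReal_zero, gaussianReal_zero_var] at hlaw
    have hs : MeasurableSet ({(0:ℝ)}ᶜ : Set ℝ) := (measurableSet_singleton 0).compl
    have hae : ∀ᵐ ω ∂μ, w j0 ⬝ᵥ ξ ω = 0 := by
      rw [ae_iff]
      have : {ω | ¬ w j0 ⬝ᵥ ξ ω = 0} = (fun ω => w j0 ⬝ᵥ ξ ω) ⁻¹' ({(0:ℝ)}ᶜ) := rfl
      rw [this, ← Measure.map_apply (measurable_dotXi hmeas (w j0)) hs, hlaw,
        Measure.dirac_apply' _ hs]
      simp
    have hprod0 : (fun ω => ∏ j, (w j ⬝ᵥ ξ ω) ^ 2) =ᵐ[μ] (fun _ => (0:ℝ)) := by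
      filter_upwards [hae] with ω h
      exact Finset.prod_eq_zero (Finset.mem_univ j0) (by rw [h]; ring)
    constructor
    · exact (integrable_const (0:ℝ)).congr hprod0.symm
    · rw [integral_congr_ae hprod0, integral_const]
      simp only [smul_eq_mul, mul_zero]
      exact mul_nonneg (mul_nonneg (pow_nonneg (by norm_num) n) (Nat.cast_nonneg _))
        (Finset.prod_nonneg fun j _ => hσ j)
  · push_neg at hz
    have hσpos : ∀ j, 0 < σ j := fun j => lt_of_le_of_ne (hσ j) (Ne.symm (hz j))
    set g : Ω → ℝ := fun ω =>
      ∑ j, (∏ i, σ i) / (n * σ j ^ n) * (w j ⬝ᵥ ξ ω) ^ (2 * n) with hgdef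
    have hgint : Integrable g μ := integrable_finset_sum _ fun j _ =>
      ((moment_dotXi hG hmeas hgauss (w j) n).1).const_mul _
    have hptwise : ∀ ω, ∏ j, (w j ⬝ᵥ ξ ω) ^ 2 ≤ g ω := by
      intro ω
      have ha : ∀ j, 0 ≤ (w j ⬝ᵥ ξ ω) ^ 2 / σ j := fun j =>
        div_nonneg (sq_nonneg _) (hσ j)
      have hAM := prod_le_sum_pow hn (fun j => (w j ⬝ᵥ ξ ω) ^ 2 / σ j) ha
      calc ∏ j, (w j ⬝ᵥ ξ ω) ^ 2
          = (∏ j, σ j) * ∏ j, ((w j ⬝ᵥ ξ ω) ^ 2 / σ j) := by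
            rw [← Finset.prod_mul_distrib]
            exact Finset.prod_congr rfl fun j _ => by
              rw [mul_comm, div_mul_cancel₀ _ (hz j)]
        _ ≤ (∏ j, σ j) * ((∑ j, ((w j ⬝ᵥ ξ ω) ^ 2 / σ j) ^ n) / n) :=
            mul_le_mul_of_nonneg_left hAM (Finset.prod_nonneg fun j _ => hσ j)
        _ = g ω := by
            rw [hgdef, Finset.sum_div, Finset.mul_sum]
            refine Finset.sum_congr rfl fun j _ => ?_
            rw [div_pow, ← pow_mul]
            have hσn : σ j ^ n ≠ 0 := pow_ne_zero n (hz j)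
            field_simp
            try exact Or.inl trivial
    constructor
    · refine hgint.mono' hPmeas.aestronglyMeasurable ?_
      refine Filter.Eventually.of_forall fun ω => ?_
      rw [Real.norm_eq_abs, abs_of_nonneg (hPnn ω)]
      exact hptwise ω
    · calc ∫ ω, ∏ j, (w j ⬝ᵥ ξ ω) ^ 2 ∂μ
          ≤ ∫ ω, g ω ∂μ := integral_mono_of_nonneg
            (Filter.Eventually.of_forall hPnn) hgint (Filter.Eventually.of_forall hptwise)
        _ = ∑ j, (∏ i, σ i) / (n * σ j ^ n) * ∫ ω, (w j ⬝ᵥ ξ ω) ^ (2 * n) ∂μ := by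
            rw [hgdef, integral_finset_sum _ fun j _ =>
              ((moment_dotXi hG hmeas hgauss (w j) n).1).const_mul _]
            exact Finset.sum_congr rfl fun j _ => integral_const_mul _ _
        _ ≤ ∑ j, (∏ i, σ i) / (n * σ j ^ n) * (2 ^ n * (n.factorial : ℝ) * σ j ^ n) := by
            refine Finset.sum_le_sum fun j _ => ?_
            refine mul_le_mul_of_nonneg_left (moment_dotXi hG hmeas hgauss (w j) n).2 ?_
            exact div_nonneg (Finset.prod_nonneg fun i _ => hσ i)
              (mul_nonneg (Nat.cast_nonneg n) (pow_nonneg (hσ j) n))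
        _ = 2 ^ n * (n.factorial : ℝ) * ∏ j, σ j := by
            have hterm : ∀ j : Fin n, (∏ i, σ i) / (n * σ j ^ n)
                * (2 ^ n * (n.factorial : ℝ) * σ j ^ n)
                = 2 ^ n * (n.factorial : ℝ) * (∏ i, σ i) / n := by
              intro j
              have hσn : σ j ^ n ≠ 0 := pow_ne_zero n (hz j)
              field_simp
            rw [Finset.sum_congr rfl fun j _ => hterm j, Finset.sum_const,
              Finset.card_univ, Fintype.card_fin, nsmul_eq_mul]
            field_simp

private lemma vecMulVec_pow_succ {p : ℕ} (v : Fin p → ℝ) (k : ℕ) :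
    (vecMulVec v v) ^ (k + 1) = (v ⬝ᵥ v) ^ k • vecMulVec v v := by
  induction k with
  | zero => simp
  | succ k ih =>
    have hAA : vecMulVec v v * vecMulVec v v = (v ⬝ᵥ v) • vecMulVec v v := by
      ext i j
      simp only [Matrix.mul_apply, Matrix.vecMulVec_apply, Matrix.smul_apply, smul_eq_mul,
        dotProduct]
      rw [Finset.sum_mul]
      exact Finset.sum_congr rfl fun x _ => by ring
    rw [pow_succ, ih, Matrix.smul_mul, hAA, smul_smul, ← pow_succ]

end WishartAux

set_option maxHeartbeats 2000000 in
theorem wishart_moment_bound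
    {Ω : Type*} [MeasurableSpace Ω] (μ : Measure Ω) [IsProbabilityMeasure μ]
    {p : ℕ} (G : Matrix (Fin p) (Fin p) ℝ) (hG : G.PosSemidef)
    (ξ : Ω → (Fin p → ℝ)) (hmeas : Measurable ξ)
    (hgauss : IsCenteredGaussian G (μ.map ξ))
    (m : ℕ) (hm : 2 ≤ m) :
    LoewnerLE (matExpect μ fun ω => (vecMulVec (ξ ω) (ξ ω)) ^ m)
      ((2 ^ m * (m.factorial : ℝ) * G.trace ^ (m - 1)) • G) := by
  obtain ⟨k, rfl⟩ : ∃ k, m = k + 1 := ⟨m - 1, by omega⟩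
  have hk1 : 1 ≤ k + 1 := by omega
  -- notation
  have hAnn : ∀ ω, 0 ≤ ξ ω ⬝ᵥ ξ ω := fun ω =>
    Finset.sum_nonneg fun i _ => mul_self_nonneg _
  have hAmeas : Measurable (fun ω => ξ ω ⬝ᵥ ξ ω) :=
    Finset.measurable_sum _ fun i _ =>
      ((measurable_pi_apply i).comp hmeas).mul ((measurable_pi_apply i).comp hmeas)
  set Q : (Fin p → ℝ) → Ω → ℝ := fun w ω => (ξ ω ⬝ᵥ ξ ω) ^ k * (w ⬝ᵥ ξ ω) ^ 2 with hQ
  set W : (Fin p → ℝ) → (Fin k → Fin p) → Fin (k + 1) → (Fin p → ℝ) :=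
    fun w g => Fin.cons w (fun t => Pi.single (g t) 1) with hWdef
  have hprodW : ∀ (w : Fin p → ℝ) (g : Fin k → Fin p) (ω : Ω),
      ∏ j : Fin (k + 1), (W w g j ⬝ᵥ ξ ω) ^ 2
        = (w ⬝ᵥ ξ ω) ^ 2 * ∏ t : Fin k, (ξ ω (g t)) ^ 2 := by
    intro w g ω
    rw [Fin.prod_univ_succ]
    simp [hWdef, single_dotProduct]
  have hQexp : ∀ (w : Fin p → ℝ) (ω : Ω),
      Q w ω = ∑ g : Fin k → Fin p, ∏ j : Fin (k + 1), (W w g j ⬝ᵥ ξ ω) ^ 2 := by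
    intro w ω
    have hAk : (ξ ω ⬝ᵥ ξ ω) ^ k
        = ∑ g : Fin k → Fin p, ∏ t : Fin k, (ξ ω (g t) * ξ ω (g t)) := by
      calc (ξ ω ⬝ᵥ ξ ω) ^ k = ∏ _t : Fin k, (∑ i, ξ ω i * ξ ω i) := by
            rw [Finset.prod_const, Finset.card_univ, Fintype.card_fin]
            rfl
        _ = ∑ g ∈ Fintype.piFinset (fun _ : Fin k => (Finset.univ : Finset (Fin p))),
              ∏ t : Fin k, (ξ ω (g t) * ξ ω (g t)) := Finset.prod_univ_sum _ _
        _ = ∑ g : Fin k → Fin p, ∏ t : Fin k, (ξ ω (g t) * ξ ω (g t)) := by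
            rw [Fintype.piFinset_univ]
    calc Q w ω = (ξ ω ⬝ᵥ ξ ω) ^ k * (w ⬝ᵥ ξ ω) ^ 2 := rfl
      _ = (∑ g : Fin k → Fin p, ∏ t : Fin k, (ξ ω (g t) * ξ ω (g t))) * (w ⬝ᵥ ξ ω) ^ 2 := by
          rw [hAk]
      _ = ∑ g : Fin k → Fin p, (w ⬝ᵥ ξ ω) ^ 2 * ∏ t : Fin k, (ξ ω (g t)) ^ 2 := by
          rw [Finset.sum_mul]
          refine Finset.sum_congr rfl fun g _ => ?_
          rw [mul_comm]
          congr 1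
          exact Finset.prod_congr rfl fun t _ => (pow_two _).symm
      _ = ∑ g : Fin k → Fin p, ∏ j : Fin (k + 1), (W w g j ⬝ᵥ ξ ω) ^ 2 :=
          Finset.sum_congr rfl fun g _ => (hprodW w g ω).symm
  have hQint : ∀ w : Fin p → ℝ, Integrable (Q w) μ := by
    intro w
    have he : Q w = fun ω => ∑ g : Fin k → Fin p, ∏ j : Fin (k + 1), (W w g j ⬝ᵥ ξ ω) ^ 2 :=
      funext fun ω => hQexp w ω
    rw [he]
    exact integrable_finset_sum _ fun g _ =>
      (prod_moment_le hG hmeas hgauss (k + 1) hk1 (W w g)).1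
  have hWσ : ∀ (w : Fin p → ℝ) (g : Fin k → Fin p),
      ∏ j : Fin (k + 1), (W w g j ⬝ᵥ G *ᵥ W w g j)
        = (w ⬝ᵥ G *ᵥ w) * ∏ t : Fin k, G (g t) (g t) := by
    intro w g
    rw [Fin.prod_univ_succ]
    simp [hWdef, single_dotProduct]
  have htr : G.trace = ∑ i, G i i := rfl
  have hQbd : ∀ w : Fin p → ℝ, ∫ ω, Q w ω ∂μ
      ≤ 2 ^ (k + 1) * (((k + 1).factorial : ℝ)) * ((w ⬝ᵥ G *ᵥ w) * (∑ i, G i i) ^ k) := by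
    intro w
    calc ∫ ω, Q w ω ∂μ
        = ∫ ω, (∑ g : Fin k → Fin p, ∏ j : Fin (k + 1), (W w g j ⬝ᵥ ξ ω) ^ 2) ∂μ :=
          integral_congr_ae (Filter.Eventually.of_forall fun ω => hQexp w ω)
      _ = ∑ g : Fin k → Fin p, ∫ ω, ∏ j : Fin (k + 1), (W w g j ⬝ᵥ ξ ω) ^ 2 ∂μ :=
          integral_finset_sum _ fun g _ =>
            (prod_moment_le hG hmeas hgauss (k + 1) hk1 (W w g)).1
      _ ≤ ∑ g : Fin k → Fin p,
            2 ^ (k + 1) * (((k + 1).factorial : ℝ)) * ∏ j : Fin (k + 1), (W w g j ⬝ᵥ G *ᵥ W w g j) :=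
          Finset.sum_le_sum fun g _ =>
            (prod_moment_le hG hmeas hgauss (k + 1) hk1 (W w g)).2
      _ = ∑ g : Fin k → Fin p,
            2 ^ (k + 1) * (((k + 1).factorial : ℝ)) * ((w ⬝ᵥ G *ᵥ w) * ∏ t : Fin k, G (g t) (g t)) :=
          Finset.sum_congr rfl fun g _ => by rw [hWσ w g]
      _ = 2 ^ (k + 1) * (((k + 1).factorial : ℝ)) * ((w ⬝ᵥ G *ᵥ w) * (∑ i, G i i) ^ k) := by
          rw [← Finset.mul_sum, ← Finset.mul_sum]
          congr 2
          calc ∑ g : Fin k → Fin p, ∏ t : Fin k, G (g t) (g t)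
              = ∑ g ∈ Fintype.piFinset (fun _ : Fin k => (Finset.univ : Finset (Fin p))),
                  ∏ t : Fin k, G (g t) (g t) := by rw [Fintype.piFinset_univ]
            _ = ∏ _t : Fin k, (∑ i, G i i) :=
                (Finset.prod_univ_sum (fun _ : Fin k => (Finset.univ : Finset (Fin p)))
                  (fun _ t => G t t)).symm
            _ = (∑ i, G i i) ^ k := by
                rw [Finset.prod_const, Finset.card_univ, Fintype.card_fin]
  have hQsingle : ∀ (i : Fin p) (ω : Ω),
      Q (Pi.single i 1) ω = (ξ ω ⬝ᵥ ξ ω) ^ k * (ξ ω i) ^ 2 := by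
    intro i ω
    simp only [hQ, single_dotProduct, one_mul]
  have hEint : ∀ i j : Fin p,
      Integrable (fun ω => (ξ ω ⬝ᵥ ξ ω) ^ k * (ξ ω i * ξ ω j)) μ := by
    intro i j
    have hg : Integrable (fun ω =>
        (1 / 2 : ℝ) * (Q (Pi.single i 1) ω + Q (Pi.single j 1) ω)) μ :=
      ((hQint _).add (hQint _)).const_mul _
    refine hg.mono' ?_ ?_
    · exact ((hAmeas.pow_const k).mul
        (((measurable_pi_apply i).comp hmeas).mul
          ((measurable_pi_apply j).comp hmeas))).aestronglyMeasurable
    · refine Filter.Eventually.of_forall fun ω => ?_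
      rw [Real.norm_eq_abs, abs_mul, abs_of_nonneg (pow_nonneg (hAnn ω) k),
        hQsingle, hQsingle]
      have h2 : |ξ ω i * ξ ω j| ≤ ((ξ ω i) ^ 2 + (ξ ω j) ^ 2) / 2 := by
        rw [abs_mul]
        nlinarith [sq_nonneg (|ξ ω i| - |ξ ω j|), sq_abs (ξ ω i), sq_abs (ξ ω j),
          abs_nonneg (ξ ω i), abs_nonneg (ξ ω j)]
      calc (ξ ω ⬝ᵥ ξ ω) ^ k * |ξ ω i * ξ ω j|
          ≤ (ξ ω ⬝ᵥ ξ ω) ^ k * (((ξ ω i) ^ 2 + (ξ ω j) ^ 2) / 2) :=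
            mul_le_mul_of_nonneg_left h2 (pow_nonneg (hAnn ω) k)
        _ = 1 / 2 * ((ξ ω ⬝ᵥ ξ ω) ^ k * (ξ ω i) ^ 2 + (ξ ω ⬝ᵥ ξ ω) ^ k * (ξ ω j) ^ 2) := by
            ring
  set M := matExpect μ fun ω => (vecMulVec (ξ ω) (ξ ω)) ^ (k + 1) with hMdef
  have hMentry : ∀ i j,
      M i j = ∫ ω, (ξ ω ⬝ᵥ ξ ω) ^ k * (ξ ω i * ξ ω j) ∂μ := by
    intro i j
    rw [hMdef]
    show ∫ ω, ((vecMulVec (ξ ω) (ξ ω)) ^ (k + 1)) i j ∂μ = _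
    refine integral_congr_ae (Filter.Eventually.of_forall fun ω => ?_)
    show ((vecMulVec (ξ ω) (ξ ω)) ^ (k + 1)) i j = (ξ ω ⬝ᵥ ξ ω) ^ k * (ξ ω i * ξ ω j)
    rw [vecMulVec_pow_succ]
    simp [Matrix.smul_apply, Matrix.vecMulVec_apply, smul_eq_mul]
  have hHerm : M.IsHermitian := by
    show Mᴴ = M
    ext i j
    rw [Matrix.conjTranspose_apply, star_trivial, hMentry, hMentry]
    exact integral_congr_ae (Filter.Eventually.of_forall fun ω => by ring)
  have hcHerm : ((2 ^ (k + 1) * (((k + 1).factorial : ℝ)) * G.trace ^ (k + 1 - 1)) • G).IsHermitian := by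
    show _ᴴ = _
    ext i j
    rw [Matrix.conjTranspose_apply, star_trivial, Matrix.smul_apply, Matrix.smul_apply]
    congr 1
    have := congrFun (congrFun hG.1 i) j
    rw [Matrix.conjTranspose_apply, star_trivial] at this
    exact this
  refine Matrix.PosSemidef.of_dotProduct_mulVec_nonneg (Matrix.IsHermitian.sub hcHerm hHerm) fun x => ?_
  have hxstar : star x = x := by
    funext i
    exact star_trivial _
  rw [hxstar, Matrix.sub_mulVec, dotProduct_sub]
  refine sub_nonneg.mpr ?_
  have hRHS : x ⬝ᵥ ((2 ^ (k + 1) * (((k + 1).factorial : ℝ)) * G.trace ^ (k + 1 - 1)) • G) *ᵥ x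
      = 2 ^ (k + 1) * (((k + 1).factorial : ℝ)) * ((x ⬝ᵥ G *ᵥ x) * (∑ i, G i i) ^ k) := by
    rw [Matrix.smul_mulVec, dotProduct_smul, smul_eq_mul, htr]
    norm_num
    ring
  have hLHS : x ⬝ᵥ M *ᵥ x = ∫ ω, Q x ω ∂μ := by
    calc x ⬝ᵥ M *ᵥ x = ∑ i, ∑ j, (x i * x j) * M i j := by
          simp only [dotProduct, Matrix.mulVec]
          refine Finset.sum_congr rfl fun i _ => ?_
          rw [Finset.mul_sum]
          exact Finset.sum_congr rfl fun j _ => by ring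
      _ = ∑ i, ∑ j, ∫ ω, (x i * x j) * ((ξ ω ⬝ᵥ ξ ω) ^ k * (ξ ω i * ξ ω j)) ∂μ := by
          refine Finset.sum_congr rfl fun i _ => Finset.sum_congr rfl fun j _ => ?_
          rw [hMentry, integral_const_mul]
      _ = ∫ ω, (∑ i, ∑ j, (x i * x j) * ((ξ ω ⬝ᵥ ξ ω) ^ k * (ξ ω i * ξ ω j))) ∂μ := by
          rw [integral_finset_sum _ fun i _ =>
            integrable_finset_sum _ fun j _ => (hEint i j).const_mul _]
          exact Finset.sum_congr rfl fun i _ => by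
            rw [integral_finset_sum _ fun j _ => (hEint i j).const_mul _]
      _ = ∫ ω, Q x ω ∂μ := by
          refine integral_congr_ae (Filter.Eventually.of_forall fun ω => ?_)
          have hx2 : (x ⬝ᵥ ξ ω) ^ 2 = ∑ i, ∑ j, (x i * ξ ω i) * (x j * ξ ω j) := by
            rw [sq]
            exact Finset.sum_mul_sum _ _ _ _
          calc ∑ i, ∑ j, (x i * x j) * ((ξ ω ⬝ᵥ ξ ω) ^ k * (ξ ω i * ξ ω j))
              = (ξ ω ⬝ᵥ ξ ω) ^ k * ∑ i, ∑ j, (x i * ξ ω i) * (x j * ξ ω j) := by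
                rw [Finset.mul_sum]
                refine Finset.sum_congr rfl fun i _ => ?_
                rw [Finset.mul_sum]
                exact Finset.sum_congr rfl fun j _ => by ring
            _ = (ξ ω ⬝ᵥ ξ ω) ^ k * (x ⬝ᵥ ξ ω) ^ 2 := by rw [← hx2]
            _ = Q x ω := rfl
  rw [hLHS, hRHS]
  exact hQbd x

end Paper
end
end
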